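/- A nonzero real number λ satisfies ((λ + i/2)/(λ − i/2))^N = 1 if and only if λ = (1/2)·cot(πk/N) for some integer k with 1 ≤ k ≤ N − 1 and 2k ≠ N. -/

import Mathlib

open Complex

lemma denom_ne (a : ℝ) : (a : ℂ) - I / 2 ≠ 0 := by
  intro h
  have := congrArg Complex.im h
  simp at this

lemma moebius_inj (a b : ℝ)
    (h : ((a:ℂ) + I/2)/((a:ℂ) - I/2) = ((b:ℂ) + I/2)/((b:ℂ) - I/2)) : a = b := by
  rw [div_eq_div_iff (denom_ne a) (denom_ne b)] at h
  have : (a:ℂ) = b := by linear_combination I * h + ((a:ℂ) - b) * Complex.I_sq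
  exact_mod_cast this

lemma aux1 (c s : ℝ) (hs : s ≠ 0) :
    (↑((1/2:ℝ)*(c/s)) : ℂ) + I/2 = (↑c + ↑s*I)/(2*↑s) := by
  have hs' : (s : ℂ) ≠ 0 := by exact_mod_cast hs
  push_cast
  field_simp

lemma aux2 (c s : ℝ) (hs : s ≠ 0) :
    (↑((1/2:ℝ)*(c/s)) : ℂ) - I/2 = (↑c - ↑s*I)/(2*↑s) := by
  have hs' : (s : ℂ) ≠ 0 := by exact_mod_cast hs
  push_cast
  field_simp

lemma key (θ : ℝ) (hs : Real.sin θ ≠ 0) :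
    ((↑((1/2 : ℝ) * (Real.cos θ / Real.sin θ)) : ℂ) + I/2) /
      ((↑((1/2 : ℝ) * (Real.cos θ / Real.sin θ)) : ℂ) - I/2) = Complex.exp (2*θ*I) := by
  have hs' : (Real.sin θ : ℂ) ≠ 0 := by exact_mod_cast hs
  have e1 : Complex.exp (θ*I) = ↑(Real.cos θ) + ↑(Real.sin θ)*I := by
    rw [Complex.exp_mul_I, ← Complex.ofReal_cos, ← Complex.ofReal_sin]
  have e2 : Complex.exp (-θ*I) = ↑(Real.cos θ) - ↑(Real.sin θ)*I := by
    rw [show (-(θ:ℂ)*I) = (-θ:ℂ)*I by ring, Complex.exp_mul_I]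
    rw [Complex.cos_neg, Complex.sin_neg, ← Complex.ofReal_cos, ← Complex.ofReal_sin]
    ring
  have h2s : (2 * (Real.sin θ : ℂ)) ≠ 0 := mul_ne_zero two_ne_zero hs'
  rw [aux1 _ _ hs, aux2 _ _ hs, ← e1, ← e2, div_div_div_cancel_right₀, ← Complex.exp_sub]
  · ring_nf
  · exact h2s

theorem one_magnon_solutions (N : ℕ) (hN : 2 ≤ N) (lam : ℝ) (hlam : lam ≠ 0) :
    (((lam : ℂ) + I / 2) / ((lam : ℂ) - I / 2)) ^ N = 1 ↔
      ∃ k : ℕ, 1 ≤ k ∧ k ≤ N - 1 ∧ 2 * k ≠ N ∧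
        lam = (1 / 2) * (Real.cos (Real.pi * k / N) / Real.sin (Real.pi * k / N)) := by
  have hNr : (N:ℝ) ≠ 0 := by exact_mod_cast (by omega : N ≠ 0)
  have hNc : (N:ℂ) ≠ 0 := by exact_mod_cast (by omega : N ≠ 0)
  have hNpos : (0:ℝ) < N := by positivity
  have : NeZero N := ⟨by omega⟩
  constructor
  · intro hz
    obtain ⟨k, hkN, hkz⟩ :=
      (Complex.isPrimitiveRoot_exp N (by omega)).eq_pow_of_pow_eq_one hz
    rw [← Complex.exp_nat_mul] at hkz
    have hk0 : k ≠ 0 := by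
      rintro rfl
      simp only [Nat.cast_zero, zero_mul, Complex.exp_zero] at hkz
      rw [eq_comm, div_eq_one_iff_eq (denom_ne lam)] at hkz
      have := congrArg Complex.im hkz
      simp at this
      norm_num at this
    have h2k : 2*k ≠ N := by
      intro hkk
      have hcast : (2:ℂ)*(k:ℂ) = (N:ℂ) := by exact_mod_cast congrArg (Nat.cast (R := ℂ)) hkk
      have harg : (k:ℂ) * (2*(Real.pi:ℂ)*I/N) = (Real.pi:ℂ)*I := by
        field_simp
        linear_combination hcast
      rw [harg, Complex.exp_pi_mul_I] at hkz
      rw [eq_comm, div_eq_iff (denom_ne lam)] at hkz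
      have : (lam:ℂ) = 0 := by linear_combination hkz/2
      exact hlam (by exact_mod_cast this)
    refine ⟨k, by omega, by omega, h2k, ?_⟩
    have hkpos : (0:ℝ) < k := by exact_mod_cast Nat.pos_of_ne_zero hk0
    have hθpos : 0 < Real.pi * k / N := by positivity
    have hθlt : Real.pi * k / N < Real.pi := by
      rw [div_lt_iff₀ hNpos]
      have hkN' : (k:ℝ) < N := by exact_mod_cast hkN
      nlinarith [Real.pi_pos]
    have hs := (Real.sin_pos_of_pos_of_lt_pi hθpos hθlt).ne'
    apply moebius_inj
    rw [key _ hs, ← hkz]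
    congr 1
    push_cast
    ring
  · rintro ⟨k, hk1, hk2, h2k, hlameq⟩
    have hkN : k < N := by omega
    have hkpos : (0:ℝ) < k := by exact_mod_cast (by omega : 0 < k)
    have hθpos : 0 < Real.pi * k / N := by positivity
    have hθlt : Real.pi * k / N < Real.pi := by
      rw [div_lt_iff₀ hNpos]
      have hkN' : (k:ℝ) < N := by exact_mod_cast hkN
      nlinarith [Real.pi_pos]
    have hs := (Real.sin_pos_of_pos_of_lt_pi hθpos hθlt).ne'
    rw [hlameq, key _ hs, ← Complex.exp_nat_mul]
    have harg : (N:ℂ) * (2*((Real.pi * k / N : ℝ):ℂ)*I) = ((k:ℤ):ℂ) * (2*(Real.pi:ℂ)*I) := by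
      push_cast
      field_simp
    rw [harg]
    exact Complex.exp_int_mul_two_pi_mul_I k
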